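/- arXiv:1901.08655 — 4 statements merged into one kernel-verified Lean document; each statement's English description precedes it below -/
import Mathlib

section
/- Let A be an invertible n×n real matrix. Then Σ_{i=1}^{n} s_i(A⁻¹)² = Σ_{i=1}^{n} dist(col_i(A), span{col_j(A) : j ≠ i})^{−2}, i.e., the squared Hilbert–Schmidt norm of A⁻¹ equals the sum over the columns of A of the inverse squared Euclidean distances from each column to the span of the remaining columns. -/
open MeasureTheory ProbabilityTheory Real

/-- The (unordered) singular values of a rectangular real matrix `B`: the square roots of the
eigenvalues of the Hermitian matrix `B * Bᴴ`. -/
noncomputable def svRect {m n : ℕ} (B : Matrix (Fin m) (Fin n) ℝ) : Fin m → ℝ :=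
  fun i => Real.sqrt ((Matrix.isHermitian_mul_conjTranspose_self B).eigenvalues i)

/-- `svDesc B i` is the `(i : ℕ) + 1`-st largest singular value of `B`, i.e. the singular values
arranged in non-increasing order, `0`-indexed. -/
noncomputable def svDesc {m n : ℕ} (B : Matrix (Fin m) (Fin n) ℝ) (i : Fin m) : ℝ :=
  (svRect B ∘ Tuple.sort (svRect B)) i.rev

/-- The smallest singular value of a square matrix. -/
noncomputable def sMin {n : ℕ} (A : Matrix (Fin n) (Fin n) ℝ) : ℝ := ⨅ i, svRect A i

/-- The largest singular value of a square matrix. -/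
noncomputable def sMax {n : ℕ} (A : Matrix (Fin n) (Fin n) ℝ) : ℝ := ⨆ i, svRect A i

/-- The Hilbert–Schmidt (Frobenius) norm of a matrix. -/
noncomputable def hsNorm {m n : ℕ} (B : Matrix (Fin m) (Fin n) ℝ) : ℝ :=
  Real.sqrt (∑ i, ∑ j, B i j ^ 2)

/-- The operator (spectral) norm `ℓ₂ → ℓ₂` of a square matrix. -/
noncomputable def opNorm {n : ℕ} (A : Matrix (Fin n) (Fin n) ℝ) : ℝ :=
  ‖LinearMap.toContinuousLinearMap (Matrix.toEuclideanLin A)‖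

/-- View a plain vector as an element of Euclidean space (so that `‖·‖` is the Euclidean norm). -/
def ev {n : ℕ} (v : Fin n → ℝ) : EuclideanSpace ℝ (Fin n) := WithLp.toLp 2 v

/-- The `j`-th column of a matrix, as a vector in Euclidean space. -/
def colE {m n : ℕ} (A : Matrix (Fin m) (Fin n) ℝ) (j : Fin n) :
    EuclideanSpace ℝ (Fin m) := ev (fun i => A i j)

/-- `colRestrict B J = B * P_J`: the matrix `B` with all columns outside `J` replaced by zero. -/
def colRestrict {m n : ℕ} (B : Matrix (Fin m) (Fin n) ℝ) (J : Finset (Fin n)) :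
    Matrix (Fin m) (Fin n) ℝ := fun i j => if j ∈ J then B i j else 0

/-- A real random variable has subgaussian moment bounded above by `K`:
`ℙ {|ξ| ≥ t} ≤ exp (1 - t ^ 2 / (2 * K ^ 2))` for all `t ≥ 0`. -/
def SubGTail {Ω : Type*} [MeasureSpace Ω] (ξ : Ω → ℝ) (K : ℝ) : Prop :=
  ∀ t : ℝ, 0 ≤ t → ℙ {ω | t ≤ |ξ ω|} ≤ ENNReal.ofReal (Real.exp (1 - t ^ 2 / (2 * K ^ 2)))

/-- A random `n × n` matrix has i.i.d. entries of zero mean, unit variance and subgaussian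
moment bounded above by `K`. -/
def IIDEntries {Ω : Type*} [MeasureSpace Ω] {n : ℕ}
    (A : Ω → Matrix (Fin n) (Fin n) ℝ) (K : ℝ) : Prop :=
  (∀ i j : Fin n, Measurable fun ω => A ω i j) ∧
  iIndepFun (fun p : Fin n × Fin n => fun ω => A ω p.1 p.2) ℙ ∧
  (∀ i j k l : Fin n, IdentDistrib (fun ω => A ω i j) (fun ω => A ω k l) ℙ ℙ) ∧
  (∀ i j : Fin n, ∫ ω, A ω i j = 0) ∧
  (∀ i j : Fin n, ∫ ω, (A ω i j) ^ 2 = 1) ∧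
  (∀ i j : Fin n, SubGTail (fun ω => A ω i j) K)

/-- A random vector in `ℝⁿ` has i.i.d. coordinates of zero mean, unit variance and subgaussian
moment bounded above by `K`. -/
def IIDCoords {Ω : Type*} [MeasureSpace Ω] {n : ℕ}
    (X : Ω → EuclideanSpace ℝ (Fin n)) (K : ℝ) : Prop :=
  (∀ i : Fin n, Measurable fun ω => X ω i) ∧
  iIndepFun (fun i : Fin n => fun ω => X ω i) ℙ ∧
  (∀ i j : Fin n, IdentDistrib (fun ω => X ω i) (fun ω => X ω j) ℙ ℙ) ∧
  (∀ i : Fin n, ∫ ω, X ω i = 0) ∧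
  (∀ i : Fin n, ∫ ω, (X ω i) ^ 2 = 1) ∧
  (∀ i : Fin n, SubGTail (fun ω => X ω i) K)


open Matrix in
lemma sum_eig_eq_trace {n : ℕ} {B : Matrix (Fin n) (Fin n) ℝ} (hB : B.IsHermitian) :
    ∑ i, hB.eigenvalues i = B.trace := by
  nth_rewrite 2 [hB.spectral_theorem]
  rw [Unitary.conjStarAlgAut_apply, Matrix.trace_mul_cycle, Matrix.UnitaryGroup.star_mul_self, Matrix.one_mul,
    Matrix.trace_diagonal]
  simp

/-- (Negative second moment identity.) For an invertible `n × n` real matrix,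
`∑ᵢ sᵢ(A⁻¹)² = ∑ᵢ dist (colᵢ(A), span {colⱼ(A) : j ≠ i})⁻²`. -/
theorem negative_second_moment (n : ℕ) (A : Matrix (Fin n) (Fin n) ℝ) (hA : IsUnit A) :
    ∑ i, svRect A⁻¹ i ^ 2 =
      ∑ i, (Metric.infDist (colE A i)
          (Submodule.span ℝ (colE A '' {j | j ≠ i}) : Set (EuclideanSpace ℝ (Fin n))) ^ 2)⁻¹ := by
  have hdet : IsUnit A.det := (Matrix.isUnit_iff_isUnit_det A).mp hA
  have hAinv : A * A⁻¹ = 1 := Matrix.mul_nonsing_inv A hdet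
  have hinvA : A⁻¹ * A = 1 := Matrix.nonsing_inv_mul A hdet
  -- LHS equals the squared Hilbert–Schmidt norm of A⁻¹
  have herm := Matrix.isHermitian_mul_conjTranspose_self A⁻¹
  have hL : ∑ i, svRect A⁻¹ i ^ 2 = ∑ i, ∑ j, (A⁻¹ i j) ^ 2 := by
    have h1 : ∀ i, svRect A⁻¹ i ^ 2 = herm.eigenvalues i := fun i =>
      Real.sq_sqrt (Matrix.eigenvalues_self_mul_conjTranspose_nonneg A⁻¹ i)
    rw [Finset.sum_congr rfl (fun i _ => h1 i), sum_eig_eq_trace herm]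
    simp [Matrix.trace, Matrix.diag, Matrix.mul_apply, Matrix.conjTranspose_apply, pow_two]
  rw [hL]
  refine Finset.sum_congr rfl (fun i _ => ?_)
  set F : Submodule ℝ (EuclideanSpace ℝ (Fin n)) := Submodule.span ℝ (colE A '' {j | j ≠ i})
  set b : EuclideanSpace ℝ (Fin n) := ev (fun j => A⁻¹ i j) with hb
  have hinner : ∀ j, inner ℝ b (colE A j) = (A⁻¹ * A) i j := by
    intro j
    simp [PiLp.inner_apply, Matrix.mul_apply, b, ev, colE]
    exact Finset.sum_congr rfl (fun _ _ => mul_comm _ _)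
  have hbx : (inner ℝ b (colE A i) : ℝ) = 1 := by rw [hinner, hinvA]; simp
  have hbF : ∀ y ∈ F, (inner ℝ b y : ℝ) = 0 := by
    intro y hy
    induction hy using Submodule.span_induction with
    | mem x hx =>
      obtain ⟨j, hj, rfl⟩ := hx
      rw [hinner, hinvA]
      exact Matrix.one_apply_ne (fun h => hj (h ▸ rfl))
    | zero => simp
    | add x y _ _ hx hy => rw [inner_add_right, hx, hy]; ring
    | smul c x _ hx => rw [inner_smul_right, hx]; ring
  have hbne : b ≠ 0 := by
    intro h
    rw [h, inner_zero_left] at hbx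
    norm_num at hbx
  have hbnorm : (0:ℝ) < ‖b‖ := norm_pos_iff.mpr hbne
  -- membership lemma
  have hmem : ∀ y : EuclideanSpace ℝ (Fin n), (inner ℝ b y : ℝ) = 0 → y ∈ F := by
    intro y hy
    have hrep : y = ∑ j, (A⁻¹.mulVec (fun k => y k)) j • colE A j := by
      apply PiLp.ext
      intro k
      have : (∑ j, (A⁻¹.mulVec (fun k => y k)) j • colE A j) k
          = ∑ j, A k j * (A⁻¹.mulVec (fun k => y k)) j := by
        simp [WithLp.ofLp_sum, colE, ev, mul_comm]
      rw [this]
      have : ∑ j, A k j * (A⁻¹.mulVec (fun k => y k)) j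
          = (A.mulVec (A⁻¹.mulVec (fun k => y k))) k := by
        simp [Matrix.mulVec, dotProduct]
      rw [this, Matrix.mulVec_mulVec, hAinv, Matrix.one_mulVec]
    rw [hrep]
    apply Submodule.sum_mem
    intro j _
    by_cases hj : j = i
    · have hci : (A⁻¹.mulVec (fun k => y k)) i = 0 := by
        have : (inner ℝ b y : ℝ) = ∑ k, A⁻¹ i k * y k := by
          simp [PiLp.inner_apply, b, ev]
          exact Finset.sum_congr rfl (fun _ _ => mul_comm _ _)
        rw [this] at hy
        simpa [Matrix.mulVec, dotProduct] using hy
      rw [hj, hci, zero_smul]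
      exact Submodule.zero_mem F
    · exact Submodule.smul_mem F _ (Submodule.subset_span ⟨j, hj, rfl⟩)
  -- the distance equals ‖b‖⁻¹
  have hne : (F : Set (EuclideanSpace ℝ (Fin n))).Nonempty := ⟨0, Submodule.zero_mem F⟩
  have hub : Metric.infDist (colE A i) (F : Set (EuclideanSpace ℝ (Fin n))) ≤ ‖b‖⁻¹ := by
    set y₀ : EuclideanSpace ℝ (Fin n) := colE A i - (‖b‖ ^ 2)⁻¹ • b with hy₀
    have hy₀F : y₀ ∈ F := by
      apply hmem
      rw [hy₀, inner_sub_right, inner_smul_right, hbx, real_inner_self_eq_norm_sq]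
      field_simp
      norm_num
    have : dist (colE A i) y₀ = ‖b‖⁻¹ := by
      rw [dist_eq_norm, hy₀, sub_sub_cancel, norm_smul]
      rw [norm_inv, norm_pow, norm_norm]
      field_simp
    calc Metric.infDist (colE A i) (F : Set (EuclideanSpace ℝ (Fin n)))
        ≤ dist (colE A i) y₀ := Metric.infDist_le_dist_of_mem hy₀F
      _ = ‖b‖⁻¹ := this
  have hlb : ‖b‖⁻¹ ≤ Metric.infDist (colE A i) (F : Set (EuclideanSpace ℝ (Fin n))) := by
    by_contra hlt
    push_neg at hlt
    obtain ⟨y, hyF, hdy⟩ := (Metric.infDist_lt_iff hne).mp hlt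
    have h1 : (1:ℝ) = inner ℝ b (colE A i - y) := by
      rw [inner_sub_right, hbx, hbF y hyF, sub_zero]
    have h2 : (1:ℝ) ≤ ‖b‖ * ‖colE A i - y‖ := by
      rw [h1]; exact real_inner_le_norm b _
    rw [dist_eq_norm] at hdy
    have : ‖b‖ * ‖colE A i - y‖ < ‖b‖ * ‖b‖⁻¹ :=
      mul_lt_mul_of_pos_left hdy hbnorm
    rw [mul_inv_cancel₀ (ne_of_gt hbnorm)] at this
    linarith
  have hd : Metric.infDist (colE A i) (F : Set (EuclideanSpace ℝ (Fin n))) = ‖b‖⁻¹ :=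
    le_antisymm hub hlb
  rw [hd, ← inv_pow, inv_inv]
  rw [← real_inner_self_eq_norm_sq]
  simp [PiLp.inner_apply, b, ev, pow_two]
  rw [← pow_two, EuclideanSpace.norm_eq, Real.sq_sqrt (by positivity)]
  simp [pow_two]
end

section
/- Let A be an n×n random matrix with i.i.d. entries of zero mean, unit variance, and subgaussian moment bounded above by K>0. Then there exists a constant c₁ > 0 depending only on K such that P{‖A‖ ≤ √n/2} ≤ exp(−c₁·n²), where ‖A‖ denotes the operator (spectral) norm. -/
open MeasureTheory ProbabilityTheory Real

noncomputable def bK (K : ℝ) : ℝ := max 1 (2*K^2*(1 + Real.log (8*K^2)))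

lemma bK_one_le (K : ℝ) : 1 ≤ bK K := le_max_left _ _

lemma bK_pos (K : ℝ) : 0 < bK K := lt_of_lt_of_le one_pos (bK_one_le K)

lemma bK_tail (K : ℝ) (hK : 0 < K) :
    Real.exp (1 - bK K / (2*K^2)) * (2*K^2) ≤ 1/4 := by
  have h2K : (0:ℝ) < 2*K^2 := by positivity
  have h8K : (0:ℝ) < 8*K^2 := by positivity
  have hb : 2*K^2*(1 + Real.log (8*K^2)) ≤ bK K := le_max_right _ _
  have h1 : 1 - bK K / (2*K^2) ≤ -Real.log (8*K^2) := by
    rw [sub_le_iff_le_add, ← sub_le_iff_le_add']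
    rw [le_div_iff₀ h2K]
    nlinarith [hb]
  calc Real.exp (1 - bK K / (2*K^2)) * (2*K^2)
      ≤ Real.exp (-Real.log (8*K^2)) * (2*K^2) := by
        have := Real.exp_le_exp.2 h1
        nlinarith [Real.exp_pos (1 - bK K / (2*K^2))]
    _ = (8*K^2)⁻¹ * (2*K^2) := by rw [Real.exp_neg, Real.exp_log h8K]
    _ = 1/4 := by field_simp; ring

lemma mgf_sq_le (K : ℝ) (hK : 0 < K) {Ω : Type} [MeasureSpace Ω]
    [IsProbabilityMeasure (ℙ : Measure Ω)]
    (ξ : Ω → ℝ) (hm : Measurable ξ) (hvar : ∫ ω, (ξ ω) ^ 2 = 1) (htail : SubGTail ξ K) :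
    mgf (fun ω => (ξ ω) ^ 2) ℙ (-(1 / bK K)) ≤ Real.exp (-(3 / (8 * bK K))) := by
  set b := bK K with hbdef
  have hb1 : 1 ≤ b := bK_one_le K
  have hb0 : 0 < b := bK_pos K
  have h2K : (0:ℝ) < 2*K^2 := by positivity
  -- integrability of ξ²
  have hmsq : Measurable fun ω => (ξ ω) ^ 2 := hm.pow_const 2
  have hint2 : Integrable (fun ω => (ξ ω) ^ 2) ℙ := by
    by_contra h
    rw [integral_undef h] at hvar
    norm_num at hvar
  -- truncated variable
  set m : Ω → ℝ := fun ω => min ((ξ ω) ^ 2) b with hmdef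
  have hm_meas : Measurable m := hmsq.min measurable_const
  have hm_nn : ∀ ω, 0 ≤ m ω := fun ω => le_min (sq_nonneg _) hb0.le
  have hm_int : Integrable m ℙ := by
    refine Integrable.mono' (integrable_const b) hm_meas.aestronglyMeasurable ?_
    filter_upwards with ω
    rw [Real.norm_eq_abs, abs_of_nonneg (hm_nn ω)]
    exact min_le_right _ _
  -- excess part
  set g : Ω → ℝ := fun ω => (ξ ω) ^ 2 - m ω with hgdef
  have hg_nn : ∀ ω, 0 ≤ g ω := fun ω => sub_nonneg.2 (min_le_left _ _)
  have hg_int : Integrable g ℙ := hint2.sub hm_int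
  -- layer cake bound on ∫ g
  have hlayer : ∫ ω, g ω = ∫ t in Set.Ioi (0:ℝ), ENNReal.toReal (ℙ {a | t < g a}) :=
    hg_int.integral_eq_integral_meas_lt (Filter.Eventually.of_forall hg_nn)
  have htail_bd : ∀ t ∈ Set.Ioi (0:ℝ),
      ENNReal.toReal (ℙ {a | t < g a}) ≤ Real.exp (1 - b/(2*K^2)) * Real.exp (-((2*K^2)⁻¹ * t)) := by
    intro t ht
    simp only [Set.mem_Ioi] at ht
    have hsub : {a | t < g a} ⊆ {a | Real.sqrt (b + t) ≤ |ξ a|} := by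
      intro a ha
      simp only [Set.mem_setOf_eq] at ha ⊢
      have hx : b + t < (ξ a) ^ 2 := by
        rcases le_or_gt ((ξ a)^2) b with h | h
        · exfalso
          have : m a = (ξ a)^2 := min_eq_left h
          simp only [hgdef, this, sub_self] at ha; linarith
        · have : m a = b := min_eq_right h.le
          simp only [hgdef, this] at ha; linarith
      calc Real.sqrt (b + t) ≤ Real.sqrt ((ξ a)^2) := Real.sqrt_le_sqrt hx.le
        _ = |ξ a| := Real.sqrt_sq_eq_abs _
    have hmono : ℙ {a | t < g a} ≤ ℙ {a | Real.sqrt (b+t) ≤ |ξ a|} := measure_mono hsub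
    have := (htail (Real.sqrt (b+t)) (Real.sqrt_nonneg _))
    rw [Real.sq_sqrt (by linarith : (0:ℝ) ≤ b + t)] at this
    refine ENNReal.toReal_le_of_le_ofReal (by positivity) ?_
    refine le_trans hmono (le_trans this (le_of_eq ?_))
    rw [← Real.exp_add]
    congr 1
    field_simp
    ring
  have hexp_int : IntegrableOn
      (fun t => Real.exp (1 - b/(2*K^2)) * Real.exp (-((2*K^2)⁻¹ * t))) (Set.Ioi 0) := by
    have := (exp_neg_integrableOn_Ioi 0 (show (0:ℝ) < (2*K^2)⁻¹ by positivity))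
    simpa [neg_mul, IntegrableOn] using this.const_mul (Real.exp (1 - b/(2*K^2)))
  have hg_le : ∫ ω, g ω ≤ 1/4 := by
    rw [hlayer]
    have hmono_int : ∫ t in Set.Ioi (0:ℝ), ENNReal.toReal (ℙ {a | t < g a})
        ≤ ∫ t in Set.Ioi (0:ℝ), Real.exp (1 - b/(2*K^2)) * Real.exp (-((2*K^2)⁻¹ * t)) := by
      refine setIntegral_mono_on ?_ hexp_int measurableSet_Ioi htail_bd
      -- integrability of the tail-probability function
      have hFmeas : Measurable (fun t : ℝ => ENNReal.toReal (ℙ {a | t < g a})) := by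
        refine Measurable.ennreal_toReal (Antitone.measurable ?_)
        intro s t hst
        exact measure_mono (fun a ha => lt_of_le_of_lt hst ha)
      refine Integrable.mono' hexp_int hFmeas.aestronglyMeasurable ?_
      rw [ae_restrict_iff' measurableSet_Ioi]
      filter_upwards with t ht
      rw [Real.norm_eq_abs, abs_of_nonneg ENNReal.toReal_nonneg]
      exact htail_bd t ht
    refine le_trans hmono_int ?_
    have hr : (0:ℝ) < (2*K^2)⁻¹ := by positivity
    have hval : ∫ t in Set.Ioi (0:ℝ), Real.exp (-((2*K^2)⁻¹ * t)) = 2*K^2 := by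
      have := integral_comp_mul_left_Ioi (fun x => Real.exp (-x)) 0 hr
      simp only [mul_zero] at this
      rw [this, integral_exp_neg_Ioi_zero, smul_eq_mul, mul_one, inv_inv]
    rw [MeasureTheory.integral_const_mul, hval]
    exact bK_tail K hK
  -- lower bound on the truncated second moment
  have hmin_ge : 3/4 ≤ ∫ ω, m ω := by
    have hsplit : ∫ ω, g ω = (∫ ω, (ξ ω)^2) - ∫ ω, m ω := integral_sub hint2 hm_int
    rw [hvar] at hsplit
    linarith
  -- pointwise convexity bound
  have hpt : ∀ ω, Real.exp (-(1/b) * (ξ ω)^2) ≤ 1 - ((1 - Real.exp (-1))/b) * m ω := by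
    intro ω
    set x := (ξ ω)^2 with hxdef
    have hx : 0 ≤ x := sq_nonneg _
    rcases le_or_gt x b with h | h
    · have hmx : m ω = x := min_eq_left h
      rw [hmx]
      set y := x / b with hydef
      have hy0 : 0 ≤ y := by positivity
      have hy1 : y ≤ 1 := by rw [hydef, div_le_one hb0]; exact h
      have hconv := convexOn_exp.2 (Set.mem_univ (-1 : ℝ)) (Set.mem_univ (0 : ℝ))
          hy0 (by linarith : (0:ℝ) ≤ 1 - y) (by ring)
      simp only [smul_eq_mul, mul_zero, add_zero, mul_neg, mul_one, Real.exp_zero] at hconv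
      have h1 : -(1/b) * x = -y := by rw [hydef]; field_simp
      rw [h1]
      calc Real.exp (-y) ≤ y * Real.exp (-1) + (1 - y) := by
            simpa [mul_comm] using hconv
        _ = 1 - ((1 - Real.exp (-1))/b) * x := by
            rw [hydef]; field_simp; ring
    · have hmx : m ω = b := min_eq_right h.le
      rw [hmx]
      have h1 : -(1/b) * x ≤ -1 := by
        rw [neg_mul, neg_le_neg_iff, one_div, ← div_eq_inv_mul, le_div_iff₀ hb0, one_mul]
        exact h.le
      calc Real.exp (-(1/b) * x) ≤ Real.exp (-1) := Real.exp_le_exp.2 h1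
        _ = 1 - ((1 - Real.exp (-1))/b) * b := by field_simp; ring
  -- integrate the pointwise bound
  have hexp_meas : Measurable (fun ω => Real.exp (-(1/b) * (ξ ω)^2)) :=
    (hmsq.const_mul _).exp
  have hexp_int2 : Integrable (fun ω => Real.exp (-(1/b) * (ξ ω)^2)) ℙ := by
    refine Integrable.mono' (integrable_const 1) hexp_meas.aestronglyMeasurable ?_
    filter_upwards with ω
    rw [Real.norm_eq_abs, abs_of_pos (Real.exp_pos _)]
    refine Real.exp_le_one_iff.2 ?_
    have := sq_nonneg (ξ ω)
    have h1b : (0:ℝ) < 1/b := by positivity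
    nlinarith
  have hRHS_int : Integrable (fun ω => 1 - ((1 - Real.exp (-1))/b) * m ω) ℙ :=
    (integrable_const 1).sub (hm_int.const_mul _)
  have hintle : ∫ ω, Real.exp (-(1/b) * (ξ ω)^2)
      ≤ ∫ ω, (1 - ((1 - Real.exp (-1))/b) * m ω) :=
    integral_mono hexp_int2 hRHS_int hpt
  have hRHSval : ∫ ω, (1 - ((1 - Real.exp (-1))/b) * m ω)
      = 1 - ((1 - Real.exp (-1))/b) * ∫ ω, m ω := by
    rw [integral_sub (integrable_const 1) (hm_int.const_mul _), integral_const,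
      MeasureTheory.integral_const_mul]
    simp
  have hhalf : 1 - Real.exp (-1) ≥ 1/2 := by
    have h2 : Real.exp (-1) ≤ 1/2 := by
      rw [Real.exp_neg]
      rw [inv_le_comm₀ (Real.exp_pos 1) (by norm_num)]
      have := Real.exp_one_gt_d9
      norm_num
      linarith
    linarith
  have hfinal : ∫ ω, Real.exp (-(1/b) * (ξ ω)^2) ≤ Real.exp (-(3/(8*b))) := by
    have hc : (1/2)/b * (3/4) ≤ ((1 - Real.exp (-1))/b) * ∫ ω, m ω := by
      have hnum : (1/2) * (3/4) ≤ (1 - Real.exp (-1)) * ∫ ω, m ω :=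
        mul_le_mul hhalf.le hmin_ge (by norm_num) (by linarith)
      calc (1/2)/b * (3/4) = ((1/2) * (3/4))/b := by ring
        _ ≤ ((1 - Real.exp (-1)) * ∫ ω, m ω)/b := by gcongr
        _ = ((1 - Real.exp (-1))/b) * ∫ ω, m ω := by ring
    have h1 : ∫ ω, Real.exp (-(1/b) * (ξ ω)^2) ≤ 1 - 3/(8*b) := by
      rw [hRHSval] at hintle
      have : (1/2)/b * (3/4) = 3/(8*b) := by field_simp; ring
      linarith
    refine le_trans h1 ?_
    have := Real.add_one_le_exp (-(3/(8*b)))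
    linarith
  -- conclude in terms of mgf
  unfold mgf
  exact hfinal

lemma sum_sq_le_of_opNorm {n : ℕ} (M : Matrix (Fin n) (Fin n) ℝ)
    (h : opNorm M ≤ Real.sqrt n / 2) :
    ∑ p : Fin n × Fin n, (M p.1 p.2) ^ 2 ≤ (n:ℝ)^2/4 := by
  have hop : (0:ℝ) ≤ opNorm M := norm_nonneg _
  have hcol : ∀ j : Fin n, ∑ i, (M i j) ^ 2 ≤ (n:ℝ)/4 := by
    intro j
    set v : EuclideanSpace ℝ (Fin n) := EuclideanSpace.single j 1 with hv
    have hvn : ‖v‖ = 1 := by rw [hv, EuclideanSpace.norm_single, norm_one]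
    set w : EuclideanSpace ℝ (Fin n) :=
      LinearMap.toContinuousLinearMap (Matrix.toEuclideanLin M) v with hw
    have hwle : ‖w‖ ≤ opNorm M := by
      have := (LinearMap.toContinuousLinearMap (Matrix.toEuclideanLin M)).le_opNorm v
      rwa [hvn, mul_one] at this
    have hwsq : ‖w‖ ^ 2 = ∑ i, (M i j) ^ 2 := by
      have hweq : ∀ i, w i = M i j := by
        intro i
        have : w = Matrix.toEuclideanLin M v := rfl
        rw [this, hv]
        show (Matrix.toEuclideanLin M (EuclideanSpace.single j 1)) i = M i j
        rw [Matrix.toEuclideanLin_apply]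
        simp [Matrix.mulVec_single]
      rw [EuclideanSpace.norm_eq, Real.sq_sqrt (by positivity)]
      congr 1
      ext i
      rw [hweq i, Real.norm_eq_abs, sq_abs]
    calc ∑ i, (M i j) ^ 2 = ‖w‖ ^ 2 := hwsq.symm
      _ ≤ (Real.sqrt n / 2) ^ 2 := by
          have h2 : ‖w‖ ≤ Real.sqrt n / 2 := le_trans hwle h
          exact pow_le_pow_left₀ (norm_nonneg _) h2 2
      _ = (n:ℝ)/4 := by
          rw [div_pow, Real.sq_sqrt (Nat.cast_nonneg n)]
          norm_num
  calc ∑ p : Fin n × Fin n, (M p.1 p.2) ^ 2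
      = ∑ i : Fin n, ∑ j : Fin n, (M i j) ^ 2 := by
        rw [Fintype.sum_prod_type (f := fun p : Fin n × Fin n => (M p.1 p.2)^2)]
    _ = ∑ j : Fin n, ∑ i : Fin n, (M i j) ^ 2 := Finset.sum_comm
    _ ≤ ∑ _j : Fin n, (n:ℝ)/4 := Finset.sum_le_sum (fun j _ => hcol j)
    _ = (n:ℝ)^2/4 := by
        rw [Finset.sum_const, Finset.card_univ, Fintype.card_fin]
        push_cast
        ring

/-- For a random matrix with i.i.d. mean-zero unit-variance subgaussian
entries, `ℙ {‖A‖ ≤ √n / 2} ≤ exp (-c₁ n²)`. -/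
theorem opNorm_small_ball (K : ℝ) (hK : 0 < K) :
    ∃ c₁ : ℝ, 0 < c₁ ∧
      ∀ (n : ℕ) (Ω : Type) [MeasureSpace Ω] [IsProbabilityMeasure (ℙ : Measure Ω)]
        (A : Ω → Matrix (Fin n) (Fin n) ℝ), IIDEntries A K →
        ℙ {ω | opNorm (A ω) ≤ Real.sqrt n / 2}
          ≤ ENNReal.ofReal (Real.exp (-c₁ * n ^ 2)) := by
  set b := bK K with hbdef
  have hb0 : 0 < b := bK_pos K
  refine ⟨1/(8*b), by positivity, ?_⟩
  intro n Ω _ _ A hA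
  obtain ⟨hmeas, hindep, _, _, hvar, htail⟩ := hA
  set t : ℝ := -(1/b) with htdef
  have ht : t ≤ 0 := by rw [htdef]; simp; positivity
  -- the squared-entry processes
  set X : Fin n × Fin n → Ω → ℝ := fun p ω => (A ω p.1 p.2) ^ 2 with hXdef
  have hXmeas : ∀ p, Measurable (X p) := fun p => (hmeas p.1 p.2).pow_const 2
  have hXindep : iIndepFun X ℙ := by
    have := hindep.comp (fun _ => fun x : ℝ => x ^ 2) (fun _ => measurable_id.pow_const 2)
    exact this
  have hXint : ∀ p : Fin n × Fin n, Integrable (fun ω => Real.exp (t * X p ω)) ℙ := by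
    intro p
    refine Integrable.mono' (integrable_const 1)
      (((hXmeas p).const_mul t).exp.aestronglyMeasurable) ?_
    filter_upwards with ω
    rw [Real.norm_eq_abs, abs_of_pos (Real.exp_pos _)]
    refine Real.exp_le_one_iff.2 ?_
    have h1 : 0 ≤ X p ω := sq_nonneg _
    exact mul_nonpos_of_nonpos_of_nonneg ht h1
  -- Chernoff bound
  have hsum_int : Integrable (fun ω => Real.exp (t * (∑ p : Fin n × Fin n, X p) ω)) ℙ :=
    hXindep.integrable_exp_mul_sum hXmeas (fun p _ => hXint p)
  have hchern := measure_le_le_exp_mul_mgf (μ := ℙ) (X := ∑ p : Fin n × Fin n, X p)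
    ((n:ℝ)^2/4) ht hsum_int
  have hmgf : mgf (∑ p : Fin n × Fin n, X p) ℙ t = ∏ p : Fin n × Fin n, mgf (X p) ℙ t :=
    hXindep.mgf_sum hXmeas Finset.univ
  have hmgf_le : ∀ p : Fin n × Fin n, mgf (X p) ℙ t ≤ Real.exp (-(3/(8*b))) := by
    intro p
    exact mgf_sq_le K hK (fun ω => A ω p.1 p.2) (hmeas p.1 p.2) (hvar p.1 p.2) (htail p.1 p.2)
  have hprod : ∏ p : Fin n × Fin n, mgf (X p) ℙ t ≤ Real.exp (-(3/(8*b))) ^ (n*n) := by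
    calc ∏ p : Fin n × Fin n, mgf (X p) ℙ t
        ≤ ∏ _p : Fin n × Fin n, Real.exp (-(3/(8*b))) :=
          Finset.prod_le_prod (fun p _ => mgf_nonneg) (fun p _ => hmgf_le p)
      _ = Real.exp (-(3/(8*b))) ^ (n*n) := by
          rw [Finset.prod_const, Finset.card_univ, Fintype.card_prod, Fintype.card_fin]
  -- assemble real bound
  have hreal : (ℙ {ω | (∑ p : Fin n × Fin n, X p) ω ≤ (n:ℝ)^2/4}).toReal
      ≤ Real.exp (-(1/(8*b)) * n ^ 2) := by
    refine le_trans hchern ?_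
    rw [hmgf]
    calc Real.exp (-t * ((n:ℝ)^2/4)) * ∏ p : Fin n × Fin n, mgf (X p) ℙ t
        ≤ Real.exp (-t * ((n:ℝ)^2/4)) * Real.exp (-(3/(8*b))) ^ (n*n) := by
          refine mul_le_mul_of_nonneg_left hprod (Real.exp_pos _).le
      _ = Real.exp (-t * ((n:ℝ)^2/4) + (n*n : ℕ) * (-(3/(8*b)))) := by
          rw [← Real.exp_nat_mul, ← Real.exp_add]
      _ ≤ Real.exp (-(1/(8*b)) * n ^ 2) := by
          refine Real.exp_le_exp.2 (le_of_eq ?_)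
          rw [htdef]
          push_cast
          field_simp
          ring
  -- event inclusion and conversion to ENNReal
  have hsub : {ω | opNorm (A ω) ≤ Real.sqrt n / 2}
      ⊆ {ω | (∑ p : Fin n × Fin n, X p) ω ≤ (n:ℝ)^2/4} := by
    intro ω hω
    simp only [Set.mem_setOf_eq] at hω ⊢
    rw [Finset.sum_apply]
    exact sum_sq_le_of_opNorm (A ω) hω
  calc ℙ {ω | opNorm (A ω) ≤ Real.sqrt n / 2}
      ≤ ℙ {ω | (∑ p : Fin n × Fin n, X p) ω ≤ (n:ℝ)^2/4} := measure_mono hsub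
    _ = ENNReal.ofReal ((ℙ {ω | (∑ p : Fin n × Fin n, X p) ω ≤ (n:ℝ)^2/4}).toReal) :=
        (ENNReal.ofReal_toReal (measure_ne_top _ _)).symm
    _ ≤ ENNReal.ofReal (Real.exp (-(1/(8*b)) * n ^ 2)) := ENNReal.ofReal_le_ofReal hreal
end

section
/- Let t > 0 and let A be an invertible n×n real matrix such that Σ_{i=1}^{n} s_i(A⁻¹)² ≤ n/t. Then the number of indices i ∈ {1,…,n} for which dist(col_i(A), span{col_j(A) : j ≠ i}) ≥ √(t/2) is at least n/2. -/
open MeasureTheory ProbabilityTheory Real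

open Matrix
open scoped RealInnerProductSpace

lemma sum_sq_svRect {n : ℕ} (B : Matrix (Fin n) (Fin n) ℝ) :
    ∑ i, svRect B i ^ 2 = ∑ i, ∑ j, B i j ^ 2 := by
  set hH := Matrix.isHermitian_mul_conjTranspose_self B
  have h1 : ∀ i, svRect B i ^ 2 = hH.eigenvalues i := fun i =>
    Real.sq_sqrt (Matrix.eigenvalues_self_mul_conjTranspose_nonneg B i)
  have h2 : ∑ i, hH.eigenvalues i = Matrix.trace (B * Bᴴ) := by
    have h := hH.spectral_theorem
    calc ∑ i, hH.eigenvalues i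
        = Matrix.trace (Matrix.diagonal hH.eigenvalues) := by
          simp [Matrix.trace_diagonal]
      _ = Matrix.trace (B * Bᴴ) := by
          conv_rhs => rw [h]
          rw [Unitary.conjStarAlgAut_apply]
          rw [Matrix.trace_mul_cycle]
          congr 1
          rw [(Matrix.mem_unitaryGroup_iff').mp (hH.eigenvectorUnitary).2]
          simp [Matrix.trace_diagonal]
  simp only [h1, h2, Matrix.trace, Matrix.diag, Matrix.mul_apply, Matrix.conjTranspose_apply,
    star_trivial, sq]

lemma inner_le_norm_mul_infDist {n : ℕ} (x u : EuclideanSpace ℝ (Fin n)) (s : Set (EuclideanSpace ℝ (Fin n)))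
    (hu : ∀ y ∈ Submodule.span ℝ s, ⟪y, u⟫ = 0) :
    ⟪x, u⟫ ≤ ‖u‖ * Metric.infDist x (Submodule.span ℝ s : Set (EuclideanSpace ℝ (Fin n))) := by
  have hne : (Submodule.span ℝ s : Set (EuclideanSpace ℝ (Fin n))).Nonempty :=
    ⟨0, Submodule.zero_mem _⟩
  rcases eq_or_ne u 0 with rfl | hu0
  · simp [Metric.infDist_nonneg]
  · have hpos : (0:ℝ) < ‖u‖ := norm_pos_iff.mpr hu0
    rw [← div_le_iff₀' hpos]
    refine le_of_not_gt fun hcon => ?_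
    obtain ⟨y, hy, hdy⟩ := (Metric.infDist_lt_iff hne).mp hcon
    rw [lt_div_iff₀ hpos] at hdy
    refine absurd hdy (not_lt.mpr ?_)
    have : ⟪x, u⟫ = ⟪x - y, u⟫ := by
      rw [inner_sub_left, hu y hy, sub_zero]
    rw [this]
    calc ⟪x - y, u⟫ ≤ ‖x - y‖ * ‖u‖ := real_inner_le_norm _ _
      _ = dist x y * ‖u‖ := by rw [dist_eq_norm]
    

/-- If `A` is invertible and `∑ᵢ sᵢ(A⁻¹)² ≤ n / t` then for at least `n / 2`
indices `i` the distance from `colᵢ(A)` to the span of the other columns is at least `√(t/2)`. -/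
theorem many_far_columns (n : ℕ) (t : ℝ) (ht : 0 < t) (A : Matrix (Fin n) (Fin n) ℝ)
    (hA : IsUnit A) (hsum : ∑ i, svRect A⁻¹ i ^ 2 ≤ (n : ℝ) / t) :
    (n : ℝ) / 2 ≤
      ({i : Fin n | Real.sqrt (t / 2) ≤ Metric.infDist (colE A i)
        (Submodule.span ℝ (colE A '' {j | j ≠ i}) : Set (EuclideanSpace ℝ (Fin n)))}).ncard := by
  classical
  set B := A⁻¹ with hB
  set v : Fin n → EuclideanSpace ℝ (Fin n) := fun i => ev (B i) with hv
  have hBA : B * A = 1 := Matrix.nonsing_inv_mul A ((Matrix.isUnit_iff_isUnit_det A).mp hA)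
  -- inner products
  have hinner : ∀ i j, ⟪colE A j, v i⟫ = if i = j then 1 else 0 := by
    intro i j
    have : ⟪colE A j, v i⟫ = (B * A) i j := by
      simp only [PiLp.inner_apply, RCLike.inner_apply, conj_trivial, Matrix.mul_apply]
      exact Finset.sum_congr rfl fun k _ => rfl
    rw [this, hBA, Matrix.one_apply]
  -- b i = ‖v i‖²
  set b : Fin n → ℝ := fun i => ∑ k, B i k ^ 2 with hb
  have hnormv : ∀ i, ‖v i‖ = Real.sqrt (b i) := by
    intro i
    rw [EuclideanSpace.norm_eq]
    congr 1
    exact Finset.sum_congr rfl fun k _ => by simp [hv, ev, sq_abs]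
  have hbnn : ∀ i, 0 ≤ b i := fun i => Finset.sum_nonneg fun k _ => sq_nonneg _
  have hsum' : ∑ i, b i ≤ (n : ℝ) / t := by
    calc ∑ i, b i = ∑ i, svRect B i ^ 2 := (sum_sq_svRect B).symm
      _ ≤ (n : ℝ) / t := hsum
  -- distance lower bound for each i
  have hdist : ∀ i, 1 ≤ Real.sqrt (b i) * Metric.infDist (colE A i)
      (Submodule.span ℝ (colE A '' {j | j ≠ i}) : Set (EuclideanSpace ℝ (Fin n))) := by
    intro i
    have horth : ∀ y ∈ Submodule.span ℝ (colE A '' {j | j ≠ i}), ⟪y, v i⟫ = 0 := by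
      intro y hy
      induction hy using Submodule.span_induction with
      | mem x hx =>
        obtain ⟨j, hj, rfl⟩ := hx
        rw [hinner i j, if_neg (fun h => hj h.symm)]
      | zero => simp
      | add x y _ _ hx hy => rw [inner_add_left, hx, hy, add_zero]
      | smul a x _ hx => rw [inner_smul_left, hx, mul_zero]
    have := inner_le_norm_mul_infDist (colE A i) (v i) (colE A '' {j | j ≠ i}) horth
    rwa [hinner i i, if_pos rfl, hnormv] at this
  -- good set
  set S : Finset (Fin n) := Finset.univ.filter (fun i => b i ≤ 2 / t) with hS
  have hgood : ∀ i ∈ S, Real.sqrt (t / 2) ≤ Metric.infDist (colE A i)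
      (Submodule.span ℝ (colE A '' {j | j ≠ i}) : Set (EuclideanSpace ℝ (Fin n))) := by
    intro i hi
    have hbi : b i ≤ 2 / t := (Finset.mem_filter.mp hi).2
    have hd := hdist i
    have hbpos : 0 < b i := by
      by_contra h
      push_neg at h
      have : b i = 0 := le_antisymm h (hbnn i)
      rw [this, Real.sqrt_zero, zero_mul] at hd; linarith
    have hsq : 0 < Real.sqrt (b i) := Real.sqrt_pos.mpr hbpos
    have h1 : 1 / Real.sqrt (b i) ≤ Metric.infDist (colE A i)
        (Submodule.span ℝ (colE A '' {j | j ≠ i}) : Set (EuclideanSpace ℝ (Fin n))) := by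
      rw [div_le_iff₀ hsq]; linarith [hd]
    refine le_trans ?_ h1
    rw [le_div_iff₀ hsq]
    calc Real.sqrt (t/2) * Real.sqrt (b i) = Real.sqrt (t/2 * b i) :=
          (Real.sqrt_mul (by positivity) _).symm
      _ ≤ Real.sqrt (t/2 * (2/t)) := Real.sqrt_le_sqrt (by nlinarith)
      _ = 1 := by
          rw [show t/2*(2/t) = 1 by field_simp]
          exact Real.sqrt_one
  -- counting
  set Sc : Finset (Fin n) := Finset.univ.filter (fun i => ¬ b i ≤ 2 / t) with hSc
  have hcompl : (Sc.card : ℝ) * (2/t) ≤ (n:ℝ)/t := by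
    calc (Sc.card : ℝ) * (2/t) = ∑ _i ∈ Sc, (2/t : ℝ) := by
          rw [Finset.sum_const, nsmul_eq_mul]
      _ ≤ ∑ i ∈ Sc, b i := Finset.sum_le_sum fun i hi =>
          le_of_lt (lt_of_not_ge (Finset.mem_filter.mp hi).2)
      _ ≤ ∑ i, b i := Finset.sum_le_sum_of_subset_of_nonneg (Finset.filter_subset _ _)
          (fun i _ _ => hbnn i)
      _ ≤ (n:ℝ)/t := hsum'
  have hcards : S.card + Sc.card = n := by
    rw [hS, hSc, Finset.card_filter_add_card_filter_not, Finset.card_univ,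
      Fintype.card_fin]
  have hSccard : (Sc.card : ℝ) ≤ (n:ℝ)/2 := by
    have h2t : (0:ℝ) < 2/t := by positivity
    calc (Sc.card : ℝ) ≤ ((n:ℝ)/t) / (2/t) := by
          rw [le_div_iff₀ h2t]; linarith [hcompl]
      _ = (n:ℝ)/2 := by field_simp
  have hScard : (n:ℝ)/2 ≤ S.card := by
    have : (S.card : ℝ) + Sc.card = n := by exact_mod_cast congrArg (Nat.cast (R := ℝ)) hcards
    linarith
  have hsub : (↑S : Set (Fin n)) ⊆ {i : Fin n | Real.sqrt (t / 2) ≤ Metric.infDist (colE A i)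
      (Submodule.span ℝ (colE A '' {j | j ≠ i}) : Set (EuclideanSpace ℝ (Fin n)))} := by
    intro i hi
    exact hgood i hi
  have hle := Set.ncard_le_ncard hsub (Set.toFinite _)
  rw [Set.ncard_coe_finset] at hle
  calc (n:ℝ)/2 ≤ S.card := hScard
    _ ≤ _ := by exact_mod_cast hle
end

section
/- Let A be an n×n real matrix, let 1 ≤ ℓ ≤ k ≤ n, and let z_1, …, z_k be orthonormal vectors in ℝⁿ such that ‖A·z_i‖₂ ≤ s for every i ≤ k, where s ≥ 0. Let Z be the k×n matrix whose rows are z_1, …, z_k. Suppose J ⊆ {1,…,n} with |J| = ℓ satisfies s_ℓ(Z_J) ≥ δ for some δ > 0, where Z_J = Z·P_J. Then for at least ℓ/2 indices i ∈ J one has dist(col_i(A), span{col_j(A) : j ∈ {1,…,n}∖J}) ≤ √2·s·√k/(δ·√ℓ). -/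
open MeasureTheory ProbabilityTheory Real

section AuxDistColumns
open Matrix


lemma sum_exchange {k n : ℕ} (W : Matrix (Fin k) (Fin n) ℝ) (a b : Fin k → ℝ) :
    ∑ j, (∑ i, W i j * a i) * (∑ i, W i j * b i)
      = ∑ i, a i * ((W * Wᴴ) *ᵥ b) i := by
  have h1 : ∀ j, (∑ i, W i j * a i) * (∑ i, W i j * b i)
      = ∑ i, ∑ i', a i * (W i j * (W i' j * b i')) := by
    intro j
    rw [Finset.sum_mul_sum]
    exact Finset.sum_congr rfl fun i _ => Finset.sum_congr rfl fun i' _ => by ring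
  simp only [h1]
  rw [Finset.sum_comm]
  refine Finset.sum_congr rfl fun i _ => ?_
  rw [Finset.sum_comm]
  simp only [Matrix.mulVec, Matrix.mul_apply, Matrix.conjTranspose_apply,
    dotProduct, star_trivial, Finset.mul_sum, Finset.sum_mul]
  exact Finset.sum_congr rfl fun i' _ => Finset.sum_congr rfl fun j _ => by ring

/-- Abstract core lemma: existence of the "dual" vectors `u i`. -/
lemma core_abstract {k n ℓ : ℕ} (W : Matrix (Fin k) (Fin n) ℝ) (J : Finset (Fin n))
    (hJ : J.card = ℓ)
    (hsupp : ∀ i j, j ∉ J → W i j = 0) (δ : ℝ) (hδ : 0 < δ)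
    (lam : Fin k → ℝ) (v : Fin k → Fin k → ℝ)
    (H1 : ∀ a b : Fin k, ∑ j, (∑ i, W i j * v a i) * (∑ i, W i j * v b i)
          = lam b * (if a = b then 1 else 0))
    (H2 : ∀ m, 0 ≤ lam m)
    (H3 : ∀ b : Fin k → ℝ, ∑ m, (∑ r, b r * v m r)^2 = ∑ r, (b r)^2)
    (hT : ℓ ≤ (Finset.univ.filter fun m => δ^2 ≤ lam m).card) :
    ∃ u : Fin n → (Fin k → ℝ),
      (∀ i ∈ J, ∀ j ∈ J, (∑ r, W r j * u i r) = if i = j then 1 else 0) ∧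
      (∀ b : Fin k → ℝ, ∑ i ∈ J, (∑ r, b r * u i r)^2 ≤ δ⁻¹^2 * ∑ r, (b r)^2) := by
  classical
  set w : Fin k → (Fin n → ℝ) := fun m j => (Real.sqrt (lam m))⁻¹ * ∑ i, W i j * v m i with hw
  set S : Finset (Fin k) := Finset.univ.filter (fun m => lam m ≠ 0) with hSdef
  set T : Finset (Fin k) := Finset.univ.filter (fun m => δ^2 ≤ lam m) with hTdef
  have hTS : T ⊆ S := by
    intro m hm
    simp only [hTdef, hSdef, Finset.mem_filter, Finset.mem_univ, true_and] at *
    intro h0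
    rw [h0] at hm
    exact absurd hm (not_le.mpr (by positivity))
  have hlampos : ∀ m ∈ S, 0 < lam m := fun m hm =>
    lt_of_le_of_ne (H2 m) (Ne.symm (Finset.mem_filter.mp hm).2)
  have hsqrt_ne : ∀ m ∈ S, Real.sqrt (lam m) ≠ 0 := by
    intro m hm
    have := hlampos m hm
    positivity
  -- support of w
  have hwsupp : ∀ m j, j ∉ J → w m j = 0 := by
    intro m j hj
    simp only [hw]
    rw [Finset.sum_eq_zero fun i _ => by rw [hsupp i j hj, zero_mul], mul_zero]
  -- orthonormality of the w's over S
  have hworth : ∀ m ∈ S, ∀ m' ∈ S, ∑ j, w m j * w m' j = if m = m' then 1 else 0 := by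
    intro m hm m' hm'
    have key := H1 m m'
    calc ∑ j, w m j * w m' j
        = ∑ j, (Real.sqrt (lam m))⁻¹ * ((Real.sqrt (lam m'))⁻¹ *
            ((∑ i, W i j * v m i) * (∑ i, W i j * v m' i))) :=
          Finset.sum_congr rfl fun j _ => by simp only [hw]; ring
      _ = (Real.sqrt (lam m))⁻¹ * ((Real.sqrt (lam m'))⁻¹ *
            ∑ j, (∑ i, W i j * v m i) * (∑ i, W i j * v m' i)) := by
          rw [← Finset.mul_sum, ← Finset.mul_sum]
      _ = (Real.sqrt (lam m))⁻¹ * ((Real.sqrt (lam m'))⁻¹ *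
            (lam m' * if m = m' then 1 else 0)) := by rw [key]
      _ = if m = m' then 1 else 0 := by
          by_cases hmm : m = m'
          · subst hmm
            simp only [if_pos rfl, mul_one]
            have hpos := hlampos m hm
            have hs := hsqrt_ne m hm
            field_simp
            rw [Real.sq_sqrt hpos.le]
          · simp [hmm]
  -- restricted sums equal full sums
  have hrsum : ∀ m m', ∑ j ∈ J, w m j * w m' j = ∑ j, w m j * w m' j :=
    fun m m' => Finset.sum_subset (Finset.subset_univ J)
      (fun j _ hj => by rw [hwsupp m j hj, zero_mul])
  -- cardinality of S
  have hScard : S.card ≤ ℓ := by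
    set w' : ↥S → EuclideanSpace ℝ ↥J := fun m => WithLp.toLp 2 (fun j : ↥J => w m.1 j.1) with hw'
    have hon : Orthonormal ℝ w' := by
      rw [orthonormal_iff_ite]
      intro m m'
      simp only [PiLp.inner_apply, RCLike.inner_apply, conj_trivial, hw', PiLp.toLp_apply]
      have hsum : ∑ j : ↥J, w m.1 j.1 * w m'.1 j.1 = ∑ j, w m.1 j * w m'.1 j := by
        rw [Finset.sum_coe_sort J (fun j => w m.1 j * w m'.1 j)]
        exact hrsum m.1 m'.1
      rw [Finset.sum_congr rfl fun j _ => mul_comm (w m'.1 j.1) (w m.1 j.1)]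
      rw [hsum, hworth m.1 m.2 m'.1 m'.2]
      by_cases hmm : m = m'
      · rw [if_pos hmm, if_pos (congrArg Subtype.val hmm)]
      · rw [if_neg hmm, if_neg (fun h => hmm (Subtype.ext h))]
    have hcard := hon.linearIndependent.fintype_card_le_finrank
    rwa [finrank_euclideanSpace, Fintype.card_coe, Fintype.card_coe, hJ] at hcard
  have hST : T = S := Finset.eq_of_subset_of_card_le hTS (hScard.trans hT)
  have hSdelta : ∀ m ∈ S, δ^2 ≤ lam m := by
    intro m hm
    rw [← hST] at hm
    exact (Finset.mem_filter.mp hm).2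
  have hSℓ : S.card = ℓ := le_antisymm hScard (hT.trans (le_of_eq (by rw [hST])))
  -- the "column orthonormality" identity
  have hP : ∀ j ∈ J, ∀ j' ∈ J, ∑ m ∈ S, w m j * w m j' = if j = j' then 1 else 0 := by
    have hcards : Fintype.card ↥S = Fintype.card ↥J := by
      rw [Fintype.card_coe, Fintype.card_coe, hSℓ, hJ]
    set e : ↥S ≃ ↥J := Fintype.equivOfCardEq hcards with he
    set Ω : Matrix ↥S ↥J ℝ := Matrix.of (fun m j => w m.1 j.1) with hΩ
    have h1 : Ω * Ωᴴ = 1 := by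
      ext m m'
      simp only [Matrix.mul_apply, Matrix.conjTranspose_apply, star_trivial, hΩ,
        Matrix.one_apply, Matrix.of_apply]
      have hsum : ∑ j : ↥J, w m.1 j.1 * w m'.1 j.1 = ∑ j, w m.1 j * w m'.1 j := by
        rw [Finset.sum_coe_sort J (fun j => w m.1 j * w m'.1 j)]
        exact hrsum m.1 m'.1
      rw [hsum, hworth m.1 m.2 m'.1 m'.2]
      by_cases hmm : m = m'
      · rw [if_pos hmm, if_pos (congrArg Subtype.val hmm)]
      · rw [if_neg hmm, if_neg (fun h => hmm (Subtype.ext h))]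
    have h2 : Ωᴴ * Ω = 1 := (Matrix.mul_eq_one_comm_of_equiv e).mp h1
    intro j hj j' hj'
    have h3 := congrFun (congrFun h2 ⟨j, hj⟩) ⟨j', hj'⟩
    simp only [Matrix.mul_apply, Matrix.conjTranspose_apply, star_trivial, hΩ,
      Matrix.one_apply, Matrix.of_apply] at h3
    rw [← Finset.sum_coe_sort S (fun m => w m j * w m j')]
    rw [h3]
    simp [Subtype.ext_iff]
  -- the dual vectors
  refine ⟨fun i r => ∑ m ∈ S, ((Real.sqrt (lam m))⁻¹ * w m i) * v m r, ?_, ?_⟩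
  · -- K1
    intro i hi j hj
    calc ∑ r, W r j * ∑ m ∈ S, ((Real.sqrt (lam m))⁻¹ * w m i) * v m r
        = ∑ r, ∑ m ∈ S, ((Real.sqrt (lam m))⁻¹ * w m i) * (W r j * v m r) := by
          refine Finset.sum_congr rfl fun r _ => ?_
          rw [Finset.mul_sum]
          exact Finset.sum_congr rfl fun m _ => by ring
      _ = ∑ m ∈ S, ∑ r, ((Real.sqrt (lam m))⁻¹ * w m i) * (W r j * v m r) :=
          Finset.sum_comm
      _ = ∑ m ∈ S, ((Real.sqrt (lam m))⁻¹ * w m i) * ∑ r, W r j * v m r := by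
          exact Finset.sum_congr rfl fun m _ => (Finset.mul_sum _ _ _).symm
      _ = ∑ m ∈ S, w m i * w m j := by
          refine Finset.sum_congr rfl fun m hm => ?_
          have hs := hsqrt_ne m hm
          have : ∑ r, W r j * v m r = Real.sqrt (lam m) * w m j := by
            simp only [hw]
            field_simp
          rw [this]
          field_simp
      _ = if i = j then 1 else 0 := hP i hi j hj
  · -- K2
    intro b
    set a : Fin k → ℝ := fun m => (Real.sqrt (lam m))⁻¹ * ∑ r, b r * v m r with ha
    have step1 : ∀ i, ∑ r, b r * ∑ m ∈ S, ((Real.sqrt (lam m))⁻¹ * w m i) * v m r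
        = ∑ m ∈ S, a m * w m i := by
      intro i
      calc ∑ r, b r * ∑ m ∈ S, ((Real.sqrt (lam m))⁻¹ * w m i) * v m r
          = ∑ r, ∑ m ∈ S, ((Real.sqrt (lam m))⁻¹ * w m i) * (b r * v m r) := by
            refine Finset.sum_congr rfl fun r _ => ?_
            rw [Finset.mul_sum]
            exact Finset.sum_congr rfl fun m _ => by ring
        _ = ∑ m ∈ S, ∑ r, ((Real.sqrt (lam m))⁻¹ * w m i) * (b r * v m r) :=
            Finset.sum_comm
        _ = ∑ m ∈ S, a m * w m i := by
            refine Finset.sum_congr rfl fun m _ => ?_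
            rw [← Finset.mul_sum, ha]
            ring
    have step2 : ∑ i ∈ J, (∑ m ∈ S, a m * w m i)^2 = ∑ m ∈ S, (a m)^2 := by
      calc ∑ i ∈ J, (∑ m ∈ S, a m * w m i)^2
          = ∑ i ∈ J, ∑ m ∈ S, ∑ m' ∈ S, (a m * a m') * (w m i * w m' i) := by
            refine Finset.sum_congr rfl fun i _ => ?_
            rw [pow_two, Finset.sum_mul_sum]
            exact Finset.sum_congr rfl fun m _ => Finset.sum_congr rfl fun m' _ => by ring
        _ = ∑ m ∈ S, ∑ m' ∈ S, (a m * a m') * ∑ i ∈ J, w m i * w m' i := by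
            rw [Finset.sum_comm]
            refine Finset.sum_congr rfl fun m _ => ?_
            rw [Finset.sum_comm]
            exact Finset.sum_congr rfl fun m' _ => (Finset.mul_sum _ _ _).symm
        _ = ∑ m ∈ S, ∑ m' ∈ S, (a m * a m') * (if m = m' then 1 else 0) := by
            refine Finset.sum_congr rfl fun m hm => Finset.sum_congr rfl fun m' hm' => ?_
            rw [hrsum m m', hworth m hm m' hm']
        _ = ∑ m ∈ S, (a m)^2 := by
            refine Finset.sum_congr rfl fun m hm => ?_
            simp only [mul_ite, mul_one, mul_zero]
            rw [Finset.sum_ite_eq S m (fun m' => a m * a m'), if_pos hm, ← pow_two]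
    calc ∑ i ∈ J, (∑ r, b r * ∑ m ∈ S, ((Real.sqrt (lam m))⁻¹ * w m i) * v m r)^2
        = ∑ i ∈ J, (∑ m ∈ S, a m * w m i)^2 :=
          Finset.sum_congr rfl fun i _ => by rw [step1 i]
      _ = ∑ m ∈ S, (a m)^2 := step2
      _ ≤ ∑ m ∈ S, δ⁻¹^2 * (∑ r, b r * v m r)^2 := by
          refine Finset.sum_le_sum fun m hm => ?_
          have h1 : (a m)^2 = (lam m)⁻¹ * (∑ r, b r * v m r)^2 := by
            rw [ha, mul_pow, inv_pow, Real.sq_sqrt (H2 m)]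
          have h2 : (lam m)⁻¹ ≤ δ⁻¹^2 := by
            rw [inv_pow]
            exact inv_anti₀ (by positivity) (hSdelta m hm)
          rw [h1]
          exact mul_le_mul_of_nonneg_right h2 (sq_nonneg _)
      _ ≤ δ⁻¹^2 * ∑ m, (∑ r, b r * v m r)^2 := by
          rw [← Finset.mul_sum]
          refine mul_le_mul_of_nonneg_left ?_ (by positivity)
          exact Finset.sum_le_sum_of_subset_of_nonneg (Finset.subset_univ S)
            (fun m _ _ => sq_nonneg _)
      _ = δ⁻¹^2 * ∑ r, (b r)^2 := by rw [H3 b]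

lemma parseval_basis {k : ℕ} (e : OrthonormalBasis (Fin k) ℝ (EuclideanSpace ℝ (Fin k)))
    (b : Fin k → ℝ) :
    ∑ m, (∑ r, b r * e m r)^2 = ∑ r, (b r)^2 := by
  have h := e.sum_inner_mul_inner (x := (WithLp.toLp 2 b : EuclideanSpace ℝ (Fin k)))
    (y := (WithLp.toLp 2 b : EuclideanSpace ℝ (Fin k)))
  simp only [PiLp.inner_apply, RCLike.inner_apply, conj_trivial, PiLp.toLp_apply] at h
  calc ∑ m, (∑ r, b r * e m r)^2
      = ∑ m, (∑ r, b r * e m r) * (∑ r, e m r * b r) := by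
        refine Finset.sum_congr rfl fun m _ => ?_
        rw [pow_two]
        exact congrArg _ (Finset.sum_congr rfl fun r _ => mul_comm _ _)
    _ = ∑ r, b r * b r := by rw [← h]; exact Finset.sum_congr rfl fun m _ => mul_comm _ _
    _ = ∑ r, (b r)^2 := Finset.sum_congr rfl fun r _ => (pow_two _).symm

lemma eig_nonneg' {k n : ℕ} (W : Matrix (Fin k) (Fin n) ℝ) (m : Fin k) :
    0 ≤ (Matrix.isHermitian_mul_conjTranspose_self W).eigenvalues m :=
  (Matrix.posSemidef_self_mul_conjTranspose W).eigenvalues_nonneg m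

lemma key_sum {k n : ℕ} (W : Matrix (Fin k) (Fin n) ℝ) (a b : Fin k) :
    ∑ j, (∑ i, W i j * (Matrix.isHermitian_mul_conjTranspose_self W).eigenvectorBasis a i)
        * (∑ i, W i j * (Matrix.isHermitian_mul_conjTranspose_self W).eigenvectorBasis b i)
      = (Matrix.isHermitian_mul_conjTranspose_self W).eigenvalues b
          * (if a = b then (1:ℝ) else 0) := by
  set hG := Matrix.isHermitian_mul_conjTranspose_self W with hGdef
  rw [sum_exchange]
  have horth := orthonormal_iff_ite.mp (hG.eigenvectorBasis).orthonormal a b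
  simp only [PiLp.inner_apply, RCLike.inner_apply, conj_trivial] at horth
  calc ∑ i, hG.eigenvectorBasis a i * ((W * Wᴴ) *ᵥ ⇑(hG.eigenvectorBasis b)) i
      = ∑ i, hG.eigenvectorBasis a i * (hG.eigenvalues b * hG.eigenvectorBasis b i) :=
        Finset.sum_congr rfl fun i _ => by
          have h2 := congrFun (hG.mulVec_eigenvectorBasis b) i
          exact congrArg (hG.eigenvectorBasis a i * ·) h2
    _ = hG.eigenvalues b * ∑ i, hG.eigenvectorBasis a i * hG.eigenvectorBasis b i := by
          rw [Finset.mul_sum]; exact Finset.sum_congr rfl fun i _ => by ring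
    _ = hG.eigenvalues b * (if a = b then (1:ℝ) else 0) := by
          rw [← horth]; congr 1; exact Finset.sum_congr rfl fun i _ => mul_comm _ _

lemma core_exists {k n ℓ : ℕ} (W : Matrix (Fin k) (Fin n) ℝ) (J : Finset (Fin n))
    (hJ : J.card = ℓ)
    (hsupp : ∀ i j, j ∉ J → W i j = 0) (δ : ℝ) (hδ : 0 < δ)
    (hT : ℓ ≤ (Finset.univ.filter fun m =>
        δ^2 ≤ (Matrix.isHermitian_mul_conjTranspose_self W).eigenvalues m).card) :
    ∃ u : Fin n → (Fin k → ℝ),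
      (∀ i ∈ J, ∀ j ∈ J, (∑ r, W r j * u i r) = if i = j then 1 else 0) ∧
      (∀ b : Fin k → ℝ, ∑ i ∈ J, (∑ r, b r * u i r)^2 ≤ δ⁻¹^2 * ∑ r, (b r)^2) :=
  core_abstract W J hJ hsupp δ hδ
    (Matrix.isHermitian_mul_conjTranspose_self W).eigenvalues
    (fun m i => (Matrix.isHermitian_mul_conjTranspose_self W).eigenvectorBasis m i)
    (key_sum W) (eig_nonneg' W)
    (parseval_basis (Matrix.isHermitian_mul_conjTranspose_self W).eigenvectorBasis) hT

lemma ev_norm_sq {n : ℕ} (x : Fin n → ℝ) : ‖ev x‖^2 = ∑ r, (x r)^2 := by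
  rw [show ‖ev x‖ = Real.sqrt (∑ r, ‖x r‖^2) by rw [EuclideanSpace.norm_eq]; simp [ev]]
  rw [Real.sq_sqrt (by positivity)]
  exact Finset.sum_congr rfl fun r _ => by rw [Real.norm_eq_abs, sq_abs]

end AuxDistColumns

/-- If `z₁, …, z_k` are orthonormal with `‖A zᵢ‖₂ ≤ s`, `Z` is the `k × n`
matrix with rows `zᵢ`, and `J` with `|J| = ℓ` satisfies `s_ℓ(Z_J) ≥ δ` (expressed by saying that
at least `ℓ` singular values of `Z_J` are `≥ δ`), then for at least `ℓ / 2` indices `i ∈ J` one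
has `dist (colᵢ(A), span {colⱼ(A) : j ∉ J}) ≤ √2 s √k / (δ √ℓ)`. -/
theorem dist_columns_bound (n k ℓ : ℕ) (hℓ : 1 ≤ ℓ) (hlk : ℓ ≤ k) (hkn : k ≤ n)
    (A : Matrix (Fin n) (Fin n) ℝ) (s : ℝ) (hs : 0 ≤ s)
    (z : Fin k → EuclideanSpace ℝ (Fin n)) (hz : Orthonormal ℝ z)
    (hAz : ∀ i : Fin k, ‖ev (A.mulVec fun j => z i j)‖ ≤ s)
    (Z : Matrix (Fin k) (Fin n) ℝ) (hZ : ∀ i j, Z i j = z i j)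
    (J : Finset (Fin n)) (hJ : J.card = ℓ) (δ : ℝ) (hδ : 0 < δ)
    (hsv : ℓ ≤ {i : Fin k | δ ≤ svRect (colRestrict Z J) i}.ncard) :
    (ℓ : ℝ) / 2 ≤
      ({i : Fin n | i ∈ J ∧ Metric.infDist (colE A i)
          (Submodule.span ℝ (colE A '' {j | j ∉ J}) : Set (EuclideanSpace ℝ (Fin n)))
        ≤ Real.sqrt 2 * s * Real.sqrt k / (δ * Real.sqrt ℓ)}).ncard := by
  classical
  set W : Matrix (Fin k) (Fin n) ℝ := colRestrict Z J with hW
  have hsupp : ∀ i j, j ∉ J → W i j = 0 := by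
    intro i j hj
    simp [hW, colRestrict, hj]
  -- convert the singular value hypothesis
  have hT : ℓ ≤ (Finset.univ.filter fun m =>
      δ^2 ≤ (Matrix.isHermitian_mul_conjTranspose_self W).eigenvalues m).card := by
    have h1 : {i : Fin k | δ ≤ svRect W i}.ncard
        = (Finset.univ.filter fun m => δ ≤ svRect W m).card := by
      rw [show {i : Fin k | δ ≤ svRect W i}
          = ↑(Finset.univ.filter fun m => δ ≤ svRect W m) by ext i; simp]
      exact Set.ncard_coe_finset _
    rw [h1] at hsv
    refine hsv.trans (Finset.card_le_card ?_)
    intro m hm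
    simp only [Finset.mem_filter, Finset.mem_univ, true_and] at *
    have h2 : δ^2 ≤ (Real.sqrt ((Matrix.isHermitian_mul_conjTranspose_self W).eigenvalues m))^2 :=
      pow_le_pow_left₀ hδ.le hm 2
    rwa [Real.sq_sqrt (Matrix.PosSemidef.eigenvalues_nonneg
      (Matrix.posSemidef_self_mul_conjTranspose W) m)] at h2
  obtain ⟨u, hK1, hK2⟩ := core_exists W J hJ hsupp δ hδ hT
  -- the approximating vectors
  set y : Fin n → (Fin n → ℝ) := fun i j => ∑ r, Z r j * u i r with hy
  have hyJ : ∀ i ∈ J, ∀ j ∈ J, y i j = if i = j then 1 else 0 := by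
    intro i hi j hj
    rw [← hK1 i hi j hj]
    exact Finset.sum_congr rfl fun r _ => by rw [hW]; simp [colRestrict, hj]
  set SP : Submodule ℝ (EuclideanSpace ℝ (Fin n)) :=
    Submodule.span ℝ (colE A '' {j | j ∉ J}) with hSP
  set D : Fin n → ℝ := fun i => Metric.infDist (colE A i) (SP : Set (EuclideanSpace ℝ (Fin n))) with hD
  set d : Fin n → ℝ := fun i => ‖ev (A.mulVec (y i))‖ with hd
  -- Step A : D i ≤ d i  for i ∈ J
  have hstepA : ∀ i ∈ J, D i ≤ d i := by
    intro i hi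
    have hmem : colE A i - ev (A.mulVec (y i)) ∈ SP := by
      have hexp : colE A i - ev (A.mulVec (y i))
          = ∑ j ∈ Finset.univ.filter (· ∉ J), (-(y i j)) • colE A j := by
        refine PiLp.ext fun r => ?_
        have h0 : (∑ j ∈ Finset.univ.filter (· ∉ J), (-(y i j)) • colE A j) r
            = ∑ j ∈ Finset.univ.filter (· ∉ J), (-(y i j)) * A r j := by
          rw [WithLp.ofLp_sum, Finset.sum_apply]
          exact Finset.sum_congr rfl fun j _ => rfl
        have h1 : (A.mulVec (y i)) r = A r i + ∑ j ∈ Finset.univ.filter (· ∉ J), A r j * y i j := by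
          have hsplit : (A.mulVec (y i)) r = ∑ j, A r j * y i j := rfl
          rw [hsplit, ← Finset.sum_filter_add_sum_filter_not Finset.univ (· ∈ J)]
          congr 1
          · have : ∀ j ∈ Finset.univ.filter (· ∈ J), A r j * y i j
                = if i = j then A r j else 0 := by
              intro j hj
              simp only [Finset.mem_filter, Finset.mem_univ, true_and] at hj
              rw [hyJ i hi j hj]
              by_cases hij : i = j <;> simp [hij]
            rw [Finset.sum_congr rfl this]
            rw [Finset.sum_ite_eq (Finset.univ.filter (· ∈ J)) i (fun j => A r j)]
            simp [hi]
        show colE A i r - (ev (A.mulVec (y i))) r = _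
        rw [h0]
        show A r i - (A.mulVec (y i)) r = _
        rw [h1]
        have h2 : ∑ j ∈ Finset.univ.filter (· ∉ J), (-(y i j)) * A r j
            = -(∑ j ∈ Finset.univ.filter (· ∉ J), A r j * y i j) := by
          rw [← Finset.sum_neg_distrib]
          exact Finset.sum_congr rfl fun j _ => by ring
        rw [h2]
        ring
      rw [hexp]
      refine Submodule.sum_mem _ fun j hj => ?_
      refine Submodule.smul_mem _ _ (Submodule.subset_span ?_)
      refine ⟨j, ?_, rfl⟩
      simp only [Finset.mem_filter, Finset.mem_univ, true_and] at hj
      exact hj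
    calc D i ≤ dist (colE A i) (colE A i - ev (A.mulVec (y i))) :=
          Metric.infDist_le_dist_of_mem hmem
      _ = ‖ev (A.mulVec (y i))‖ := by rw [dist_eq_norm, sub_sub_cancel]
      _ = d i := rfl
  -- Step B : sum of squared distances bound
  have hrepr : ∀ (i : Fin n) (r : Fin n), (A.mulVec (y i)) r
      = ∑ m, (A.mulVec fun j => z m j) r * u i m := by
    intro i r
    have h1 : (A.mulVec (y i)) r = ∑ j, A r j * ∑ m, Z m j * u i m := rfl
    rw [h1]
    calc ∑ j, A r j * ∑ m, Z m j * u i m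
        = ∑ j, ∑ m, (A r j * Z m j) * u i m := by
          refine Finset.sum_congr rfl fun j _ => ?_
          rw [Finset.mul_sum]
          exact Finset.sum_congr rfl fun m _ => by ring
      _ = ∑ m, ∑ j, (A r j * Z m j) * u i m := Finset.sum_comm
      _ = ∑ m, (A.mulVec fun j => z m j) r * u i m := by
          refine Finset.sum_congr rfl fun m _ => ?_
          rw [← Finset.sum_mul]
          congr 1
          show ∑ j, A r j * Z m j = ∑ j, A r j * z m j
          exact Finset.sum_congr rfl fun j _ => by rw [hZ]
  have hstepB : ∑ i ∈ J, (d i)^2 ≤ δ⁻¹^2 * ((k : ℝ) * s^2) := by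
    calc ∑ i ∈ J, (d i)^2
        = ∑ i ∈ J, ∑ r, ((A.mulVec (y i)) r)^2 := by
          refine Finset.sum_congr rfl fun i _ => ?_
          simp only [hd]
          exact ev_norm_sq _
      _ = ∑ i ∈ J, ∑ r, (∑ m, (A.mulVec fun j => z m j) r * u i m)^2 :=
          Finset.sum_congr rfl fun i _ => Finset.sum_congr rfl fun r _ => by rw [hrepr]
      _ = ∑ r, ∑ i ∈ J, (∑ m, (A.mulVec fun j => z m j) r * u i m)^2 := Finset.sum_comm
      _ ≤ ∑ r : Fin n, δ⁻¹^2 * ∑ m, ((A.mulVec fun j => z m j) r)^2 :=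
          Finset.sum_le_sum fun r _ => hK2 (fun m => (A.mulVec fun j => z m j) r)
      _ = δ⁻¹^2 * ∑ m, ∑ r, ((A.mulVec fun j => z m j) r)^2 := by
          rw [← Finset.mul_sum, Finset.sum_comm]
      _ ≤ δ⁻¹^2 * ((k:ℝ) * s^2) := by
          refine mul_le_mul_of_nonneg_left ?_ (by positivity)
          calc ∑ m, ∑ r, ((A.mulVec fun j => z m j) r)^2
              = ∑ m : Fin k, ‖ev (A.mulVec fun j => z m j)‖^2 :=
                Finset.sum_congr rfl fun m _ => (ev_norm_sq _).symm
            _ ≤ ∑ m : Fin k, s^2 := Finset.sum_le_sum fun m _ =>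
                pow_le_pow_left₀ (norm_nonneg _) (hAz m) 2
            _ = (k:ℝ) * s^2 := by
                rw [Finset.sum_const, Finset.card_univ, Fintype.card_fin, nsmul_eq_mul]
  -- Step C : counting
  set τ : ℝ := Real.sqrt 2 * s * Real.sqrt k / (δ * Real.sqrt ℓ) with hτ
  have hℓpos : (0:ℝ) < (ℓ:ℝ) := by exact_mod_cast hℓ
  have hkpos : (0:ℝ) < (k:ℝ) := by exact_mod_cast lt_of_lt_of_le Nat.zero_lt_one (hℓ.trans hlk)
  have hτnonneg : 0 ≤ τ := by
    rw [hτ]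
    exact div_nonneg
      (mul_nonneg (mul_nonneg (Real.sqrt_nonneg 2) hs) (Real.sqrt_nonneg k))
      (le_of_lt (mul_pos hδ (Real.sqrt_pos.mpr hℓpos)))
  have hτsq : τ^2 * ((ℓ:ℝ)/2) = δ⁻¹^2 * ((k:ℝ) * s^2) := by
    have h2 : (Real.sqrt 2)^2 = 2 := Real.sq_sqrt (by norm_num)
    have hk2 : (Real.sqrt (k:ℝ))^2 = (k:ℝ) := Real.sq_sqrt (Nat.cast_nonneg k)
    have hl2 : (Real.sqrt (ℓ:ℝ))^2 = (ℓ:ℝ) := Real.sq_sqrt (Nat.cast_nonneg ℓ)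
    have hδ0 : δ ≠ 0 := hδ.ne'
    have hℓ0 : (ℓ:ℝ) ≠ 0 := hℓpos.ne'
    rw [hτ, div_pow, mul_pow, mul_pow, mul_pow, h2, hk2, hl2]
    field_simp
  have hset : {i : Fin n | i ∈ J ∧ Metric.infDist (colE A i)
        (SP : Set (EuclideanSpace ℝ (Fin n))) ≤ τ}
      = ↑(J.filter fun i => D i ≤ τ) := by
    ext i
    simp [hD]
  rw [hset, Set.ncard_coe_finset]
  set Good := J.filter (fun i => D i ≤ τ) with hGood
  set Bad := J.filter (fun i => ¬ (D i ≤ τ)) with hBad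
  have hsplit : Good.card + Bad.card = ℓ := by
    rw [hGood, hBad, Finset.card_filter_add_card_filter_not, hJ]
  have hBadBound : (Bad.card : ℝ) * τ^2 ≤ δ⁻¹^2 * ((k:ℝ)*s^2) := by
    calc (Bad.card : ℝ) * τ^2 = ∑ _i ∈ Bad, τ^2 := by
          rw [Finset.sum_const, nsmul_eq_mul]
      _ ≤ ∑ i ∈ Bad, (d i)^2 := by
          refine Finset.sum_le_sum fun i hi => ?_
          have hiJ : i ∈ J := (Finset.mem_filter.mp hi).1
          have hlt : τ < D i := not_le.mp (Finset.mem_filter.mp hi).2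
          exact pow_le_pow_left₀ hτnonneg (le_trans hlt.le (hstepA i hiJ)) 2
      _ ≤ ∑ i ∈ J, (d i)^2 := Finset.sum_le_sum_of_subset_of_nonneg
          (Finset.filter_subset _ _) (fun i _ _ => sq_nonneg _)
      _ ≤ _ := hstepB
  rcases eq_or_lt_of_le hs with hs0 | hs0
  · -- s = 0 : every distance is 0
    have hτ0 : δ⁻¹^2 * ((k:ℝ)*s^2) = 0 := by rw [← hs0]; ring
    have hDi : ∀ i ∈ J, D i ≤ τ := by
      intro i hi
      have h1 : ∑ i' ∈ J, (d i')^2 ≤ 0 := le_of_le_of_eq hstepB hτ0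
      have h2 : (d i)^2 ≤ 0 := by
        have h2' : (d i)^2 ≤ ∑ x ∈ J, (d x)^2 :=
          Finset.single_le_sum (f := fun i' => (d i')^2) (fun i' _ => sq_nonneg _) hi
        linarith
      have h3 : d i = 0 := by
        have : (d i)^2 = 0 := le_antisymm h2 (sq_nonneg _)
        exact pow_eq_zero_iff (by norm_num) |>.mp this
      have h4 : D i ≤ 0 := h3 ▸ hstepA i hi
      exact h4.trans hτnonneg
    have hGJ : Good = J := by rw [hGood]; exact Finset.filter_true_of_mem hDi
    rw [hGJ, hJ]
    linarith
  · -- s > 0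
    have hτpos : 0 < τ := by
      rw [hτ]
      exact div_pos
        (mul_pos (mul_pos (Real.sqrt_pos.mpr two_pos) hs0) (Real.sqrt_pos.mpr hkpos))
        (mul_pos hδ (Real.sqrt_pos.mpr hℓpos))
    have hBadcard : (Bad.card : ℝ) ≤ (ℓ:ℝ)/2 := by
      have h1 : (Bad.card : ℝ) * τ^2 ≤ ((ℓ:ℝ)/2) * τ^2 := by
        rw [← hτsq] at hBadBound
        linarith
      exact le_of_mul_le_mul_right h1 (pow_pos hτpos 2)
    have hGB : (Good.card : ℝ) + (Bad.card : ℝ) = (ℓ:ℝ) := by exact_mod_cast hsplit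
    linarith
end
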